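/- arXiv:2410.21045 — 4 statements merged into one kernel-verified Lean document; each statement's English description precedes it below -/
import Mathlib

section
/- Let ℋ : ℝ × ℝ × ]0,+∞[ → ℝ be C¹ with ∂_ρ ℋ > 0 and let Ψ be C¹ with ℋ(τ,ϑ,Ψ(ϑ,τ,h)) = h for all (ϑ,τ,h). Let (θ,ρ) : I → ℝ × ]0,+∞[ solve θ̇ = ∂_ρ ℋ(t,θ,ρ), −ρ̇ = ∂_θ ℋ(t,θ,ρ), with θ̇(t) > 0 on I, let τ : J → I be the inverse of θ, and define h(ϑ) = ℋ(τ(ϑ), ϑ, ρ(τ(ϑ))). Then (τ, h) solves the system τ' = ∂_h Ψ(ϑ,τ,h), −h' = ∂_τ Ψ(ϑ,τ,h) on J. -/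
/-- From times to angles: if `(θ, ρ)` solves `θ̇ = ∂_ρ ℋ`, `−ρ̇ = ∂_θ ℋ` with `θ̇ > 0`,
`τ` is the inverse of `θ`, and `h(ϑ) = ℋ(τ(ϑ), ϑ, ρ(τ(ϑ)))`, then `(τ, h)` solves
`τ' = ∂_h Ψ(ϑ, τ, h)`, `−h' = ∂_τ Ψ(ϑ, τ, h)`, where `Ψ` is the implicit function of
`ℋ` in the radial variable. -/
theorem stmt7 (calH Ψ : ℝ → ℝ → ℝ → ℝ)
    (hH : ContDiffOn ℝ 1 (fun p : ℝ × ℝ × ℝ => calH p.1 p.2.1 p.2.2)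
      {p : ℝ × ℝ × ℝ | 0 < p.2.2})
    (hΨ : ContDiffOn ℝ 1 (fun p : ℝ × ℝ × ℝ => Ψ p.1 p.2.1 p.2.2)
      {p : ℝ × ℝ × ℝ | 0 < p.2.2})
    (hpos : ∀ t θ ρ : ℝ, 0 < ρ → 0 < deriv (fun r => calH t θ r) ρ)
    (hinv1 : ∀ t θ ρ : ℝ, 0 < ρ → Ψ θ t (calH t θ ρ) = ρ)
    (hinv2 : ∀ ϑ τ h : ℝ, 0 < h → calH τ ϑ (Ψ ϑ τ h) = h)
    (I J : Set ℝ) (hI : IsOpen I) (hJ : IsOpen J)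
    (θ ρ : ℝ → ℝ) (hρpos : ∀ t ∈ I, 0 < ρ t)
    (hθsys : ∀ t ∈ I, HasDerivAt θ (deriv (fun r => calH t (θ t) r) (ρ t)) t)
    (hρsys : ∀ t ∈ I, HasDerivAt ρ (-(deriv (fun a => calH t a (ρ t)) (θ t))) t)
    (hθpos : ∀ t ∈ I, 0 < deriv θ t)
    (τ : ℝ → ℝ) (hτmaps : Set.MapsTo τ J I) (hθmaps : Set.MapsTo θ I J)
    (hτθ : ∀ t ∈ I, τ (θ t) = t) (hθτ : ∀ ϑ ∈ J, θ (τ ϑ) = ϑ)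
    (hτd : ∀ ϑ ∈ J, DifferentiableAt ℝ τ ϑ)
    (h : ℝ → ℝ)
    (hdefh : ∀ ϑ : ℝ, h ϑ = calH (τ ϑ) ϑ (ρ (τ ϑ))) :
    ∀ ϑ ∈ J,
      HasDerivAt τ (deriv (fun a => Ψ ϑ (τ ϑ) a) (h ϑ)) ϑ ∧
      HasDerivAt h (-(deriv (fun s => Ψ ϑ s (h ϑ)) (τ ϑ))) ϑ := by
  have hopen : IsOpen {p : ℝ × ℝ × ℝ | 0 < p.2.2} :=
    isOpen_lt continuous_const (continuous_snd.comp continuous_snd)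
  intro ϑ0 hϑ0
  set t0 := τ ϑ0 with ht0def
  have ht0I : t0 ∈ I := hτmaps hϑ0
  have hθt0 : θ t0 = ϑ0 := hθτ ϑ0 hϑ0
  set r0 := ρ t0 with hr0def
  have hr0 : 0 < r0 := hρpos t0 ht0I
  set F : ℝ × ℝ × ℝ → ℝ := fun p => calH p.1 p.2.1 p.2.2 with hFdef
  have hx0 : ((t0, ϑ0, r0) : ℝ × ℝ × ℝ) ∈ {p : ℝ × ℝ × ℝ | 0 < p.2.2} := hr0
  have hFs : HasStrictFDerivAt F (fderiv ℝ F (t0, ϑ0, r0)) (t0, ϑ0, r0) :=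
    (hH.contDiffAt (hopen.mem_nhds hx0)).hasStrictFDerivAt one_ne_zero
  set dF := fderiv ℝ F (t0, ϑ0, r0) with hdFdef
  set Ht := dF (1, 0, 0) with hHtdef
  set Hθ := dF (0, 1, 0) with hHθdef
  set A := dF (0, 0, 1) with hAdef
  have hdFlin : ∀ u v w : ℝ, dF (u, v, w) = u * Ht + v * Hθ + w * A := by
    intro u v w
    have hv : ((u, v, w) : ℝ × ℝ × ℝ)
        = u • ((1, 0, 0) : ℝ × ℝ × ℝ) + v • (0, 1, 0) + w • (0, 0, 1) := by
      simp [Prod.ext_iff]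
    rw [hv, map_add, map_add, map_smul, map_smul, map_smul,
      ← hHtdef, ← hHθdef, ← hAdef]
    simp only [smul_eq_mul]
  -- partial derivatives as 1D derivatives
  have hA : HasDerivAt (fun r => calH t0 ϑ0 r) A r0 := by
    have hc : HasDerivAt (fun r : ℝ => ((t0, ϑ0, r) : ℝ × ℝ × ℝ)) (0, 0, 1) r0 :=
      (hasDerivAt_const r0 t0).prodMk ((hasDerivAt_const r0 ϑ0).prodMk (hasDerivAt_id r0))
    exact hFs.hasFDerivAt.comp_hasDerivAt_of_eq (x := r0) hc rfl
  have hHt : HasDerivAt (fun s => calH s ϑ0 r0) Ht t0 := by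
    have hc : HasDerivAt (fun s : ℝ => ((s, ϑ0, r0) : ℝ × ℝ × ℝ)) (1, 0, 0) t0 :=
      (hasDerivAt_id t0).prodMk ((hasDerivAt_const t0 ϑ0).prodMk (hasDerivAt_const t0 r0))
    exact hFs.hasFDerivAt.comp_hasDerivAt_of_eq (x := t0) hc rfl
  have hHθ : HasDerivAt (fun a => calH t0 a r0) Hθ ϑ0 := by
    have hc : HasDerivAt (fun a : ℝ => ((t0, a, r0) : ℝ × ℝ × ℝ)) (0, 1, 0) ϑ0 :=
      (hasDerivAt_const ϑ0 t0).prodMk ((hasDerivAt_id ϑ0).prodMk (hasDerivAt_const ϑ0 r0))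
    exact hFs.hasFDerivAt.comp_hasDerivAt_of_eq (x := ϑ0) hc rfl
  have hApos : 0 < A := hA.deriv ▸ hpos t0 ϑ0 r0 hr0
  have hA0 : A ≠ 0 := ne_of_gt hApos
  -- derivatives of θ, ρ, τ
  have hθA : HasDerivAt θ A t0 := by
    have := hθsys t0 ht0I
    rwa [hθt0, hA.deriv] at this
  have hρA : HasDerivAt ρ (-Hθ) t0 := by
    have := hρsys t0 ht0I
    rwa [hθt0, hHθ.deriv] at this
  have hτdd := hτd ϑ0 hϑ0
  have hτA : HasDerivAt τ A⁻¹ ϑ0 := by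
    have hτθd : HasDerivAt τ (deriv τ ϑ0) (θ t0) := by rw [hθt0]; exact hτdd.hasDerivAt
    have hcomp : HasDerivAt (fun t => τ (θ t)) (deriv τ ϑ0 * A) t0 := hτθd.comp t0 hθA
    have hev : (fun t => τ (θ t)) =ᶠ[nhds t0] id :=
      Filter.eventuallyEq_of_mem (hI.mem_nhds ht0I) fun t ht => hτθ t ht
    have hone : HasDerivAt (id : ℝ → ℝ) (deriv τ ϑ0 * A) t0 :=
      hcomp.congr_of_eventuallyEq hev.symm
    have h1 : deriv τ ϑ0 * A = 1 := hone.unique (hasDerivAt_id t0)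
    have : deriv τ ϑ0 = A⁻¹ := eq_inv_of_mul_eq_one_left h1
    rw [← this]; exact hτdd.hasDerivAt
  -- the 2D implicit function
  set h0 := calH t0 ϑ0 r0 with hh0def
  have hhϑ0 : h ϑ0 = h0 := hdefh ϑ0
  set L1 : ℝ × ℝ →L[ℝ] ℝ × ℝ :=
    (ContinuousLinearMap.fst ℝ ℝ ℝ).prod
      (Ht • ContinuousLinearMap.fst ℝ ℝ ℝ + A • ContinuousLinearMap.snd ℝ ℝ ℝ) with hL1def
  set L2 : ℝ × ℝ →L[ℝ] ℝ × ℝ :=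
    (ContinuousLinearMap.fst ℝ ℝ ℝ).prod
      (A⁻¹ • (ContinuousLinearMap.snd ℝ ℝ ℝ - Ht • ContinuousLinearMap.fst ℝ ℝ ℝ)) with hL2def
  have hL1app : ∀ p : ℝ × ℝ, L1 p = (p.1, Ht * p.1 + A * p.2) := fun p => rfl
  have hL2app : ∀ p : ℝ × ℝ, L2 p = (p.1, A⁻¹ * (p.2 - Ht * p.1)) := fun p => rfl
  have hinvL : Function.LeftInverse L2 L1 := by
    intro p
    rw [hL1app, hL2app]
    refine Prod.ext rfl ?_
    field_simp
    ring
  have hinvR : Function.RightInverse L2 L1 := by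
    intro p
    rw [hL2app, hL1app]
    refine Prod.ext rfl ?_
    field_simp
    ring
  set e : (ℝ × ℝ) ≃L[ℝ] ℝ × ℝ := ContinuousLinearEquiv.equivOfInverse L1 L2 hinvL hinvR
    with hedef
  set Ξ : ℝ × ℝ → ℝ × ℝ := fun p => (p.1, calH p.1 ϑ0 p.2) with hΞdef
  have hΞ : HasStrictFDerivAt Ξ (e : ℝ × ℝ →L[ℝ] ℝ × ℝ) (t0, r0) := by
    set M : ℝ × ℝ →L[ℝ] ℝ × ℝ × ℝ :=
      (ContinuousLinearMap.fst ℝ ℝ ℝ).prod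
        ((0 : ℝ × ℝ →L[ℝ] ℝ).prod (ContinuousLinearMap.snd ℝ ℝ ℝ)) with hMdef
    have hG : HasStrictFDerivAt (fun p : ℝ × ℝ => ((p.1, ϑ0, p.2) : ℝ × ℝ × ℝ)) M (t0, r0) :=
      (ContinuousLinearMap.fst ℝ ℝ ℝ).hasStrictFDerivAt.prodMk
        ((hasStrictFDerivAt_const ϑ0 _).prodMk (ContinuousLinearMap.snd ℝ ℝ ℝ).hasStrictFDerivAt)
    have h2 : HasStrictFDerivAt (fun p : ℝ × ℝ => F (p.1, ϑ0, p.2)) (dF.comp M) (t0, r0) :=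
      hFs.comp (t0, r0) hG
    have h1 : HasStrictFDerivAt (fun p : ℝ × ℝ => p.1) (ContinuousLinearMap.fst ℝ ℝ ℝ) (t0, r0) :=
      (ContinuousLinearMap.fst ℝ ℝ ℝ).hasStrictFDerivAt
    have hmain := h1.prodMk h2
    have heq : (ContinuousLinearMap.fst ℝ ℝ ℝ).prod (dF.comp M)
        = (e : ℝ × ℝ →L[ℝ] ℝ × ℝ) := by
      refine ContinuousLinearMap.ext fun p => ?_
      have hMdF : dF ((p.1, (0 : ℝ), p.2) : ℝ × ℝ × ℝ) = Ht * p.1 + A * p.2 := by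
        rw [hdFlin]; ring
      show ((p.1, dF ((p.1, (0 : ℝ), p.2) : ℝ × ℝ × ℝ)) : ℝ × ℝ) = L1 p
      rw [hMdF, hL1app]
    rw [← heq]
    exact hmain
  have hg : ∀ᶠ q in nhds ((t0, r0) : ℝ × ℝ),
      (fun p : ℝ × ℝ => ((p.1, Ψ ϑ0 p.1 p.2) : ℝ × ℝ)) (Ξ q) = q := by
    have hmem : {q : ℝ × ℝ | 0 < q.2} ∈ nhds ((t0, r0) : ℝ × ℝ) :=
      (isOpen_lt continuous_const continuous_snd).mem_nhds hr0
    refine Filter.eventually_of_mem hmem fun q hq => ?_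
    exact Prod.ext rfl (hinv1 q.1 ϑ0 q.2 hq)
  have hΦ2 : HasStrictFDerivAt (fun p : ℝ × ℝ => ((p.1, Ψ ϑ0 p.1 p.2) : ℝ × ℝ))
      (e.symm : ℝ × ℝ →L[ℝ] ℝ × ℝ) (t0, h0) := hΞ.to_local_left_inverse hg
  have hesymm : ∀ q : ℝ × ℝ, (e.symm : ℝ × ℝ →L[ℝ] ℝ × ℝ) q = (q.1, A⁻¹ * (q.2 - Ht * q.1)) := by
    intro q
    rw [hedef, ContinuousLinearEquiv.symm_equivOfInverse]
    exact hL2app q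
  have hΦ : HasStrictFDerivAt (fun p : ℝ × ℝ => Ψ ϑ0 p.1 p.2)
      ((ContinuousLinearMap.snd ℝ ℝ ℝ).comp (e.symm : ℝ × ℝ →L[ℝ] ℝ × ℝ)) (t0, h0) :=
    (ContinuousLinearMap.snd ℝ ℝ ℝ).hasStrictFDerivAt.comp (t0, h0) hΦ2
  have hΦval : ∀ q : ℝ × ℝ,
      ((ContinuousLinearMap.snd ℝ ℝ ℝ).comp (e.symm : ℝ × ℝ →L[ℝ] ℝ × ℝ)) q
        = A⁻¹ * (q.2 - Ht * q.1) := by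
    intro q
    rw [ContinuousLinearMap.coe_comp', Function.comp_apply, hesymm]
    rfl
  -- conclusion 1
  have hc1 : HasDerivAt (fun a => Ψ ϑ0 t0 a) A⁻¹ h0 := by
    have hcur : HasDerivAt (fun a : ℝ => ((t0, a) : ℝ × ℝ)) (0, 1) h0 :=
      (hasDerivAt_const h0 t0).prodMk (hasDerivAt_id h0)
    have := hΦ.hasFDerivAt.comp_hasDerivAt_of_eq (x := h0) hcur rfl
    rw [hΦval] at this
    simpa [Function.comp_def] using this
  have hc2 : HasDerivAt (fun s => Ψ ϑ0 s h0) (-(Ht * A⁻¹)) t0 := by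
    have hcur : HasDerivAt (fun s : ℝ => ((s, h0) : ℝ × ℝ)) (1, 0) t0 :=
      (hasDerivAt_id t0).prodMk (hasDerivAt_const t0 h0)
    have := hΦ.hasFDerivAt.comp_hasDerivAt_of_eq (x := t0) hcur rfl
    rw [hΦval] at this
    have hval : A⁻¹ * (((1 : ℝ), (0 : ℝ)).2 - Ht * ((1 : ℝ), (0 : ℝ)).1) = -(Ht * A⁻¹) := by
      simp; ring
    rw [hval] at this
    exact this
  -- derivative of h
  have hhd : HasDerivAt h (Ht * A⁻¹) ϑ0 := by
    have hρτ : HasDerivAt (fun ϑ => ρ (τ ϑ)) (-Hθ * A⁻¹) ϑ0 := hρA.comp ϑ0 hτA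
    have hcur : HasDerivAt (fun ϑ : ℝ => ((τ ϑ, ϑ, ρ (τ ϑ)) : ℝ × ℝ × ℝ))
        (A⁻¹, 1, -Hθ * A⁻¹) ϑ0 :=
      hτA.prodMk ((hasDerivAt_id ϑ0).prodMk hρτ)
    have hF' := hFs.hasFDerivAt.comp_hasDerivAt_of_eq (x := ϑ0) hcur rfl
    have heq : h =ᶠ[nhds ϑ0] (F ∘ fun ϑ : ℝ => ((τ ϑ, ϑ, ρ (τ ϑ)) : ℝ × ℝ × ℝ)) :=
      Filter.Eventually.of_forall fun ϑ => hdefh ϑ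
    have hh' : HasDerivAt h (dF (A⁻¹, 1, -Hθ * A⁻¹)) ϑ0 := hF'.congr_of_eventuallyEq heq
    have hval : dF (A⁻¹, 1, -Hθ * A⁻¹) = Ht * A⁻¹ := by
      rw [hdFlin]
      field_simp
      ring
    rwa [hval] at hh'
  refine ⟨?_, ?_⟩
  · have hder : deriv (fun a => Ψ ϑ0 t0 a) (h ϑ0) = A⁻¹ := by
      rw [hhϑ0]; exact hc1.deriv
    rw [hder]; exact hτA
  · have hder : deriv (fun s => Ψ ϑ0 s (h ϑ0)) t0 = -(Ht * A⁻¹) := by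
      rw [hhϑ0]; exact hc2.deriv
    rw [hder, neg_neg]; exact hhd
end

section
/- Let z = (x,y) be a C¹ solution on [t₀, +∞) of ẋ = f(t,x,y), −ẏ = g(t,x,y) staying in the open first quadrant {x > 0, y > 0}, with x(t) ≥ δ' > 0 for all t ≥ t₀, and suppose there is c' > 0 such that g(t,x(t),y(t))x(t) + f(t,x(t),y(t))y(t) ≥ c'(x(t)² + y(t)²) for all t ≥ t₀. Then writing z in modified polar coordinates, θ̇(t) ≥ c' for all t ≥ t₀; consequently z cannot remain in the first quadrant for all t ≥ t₀ (it reaches the positive x-axis, i.e., y vanishes, in finite time). -/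
open Real

/-- A solution staying in the open first quadrant for all `t ≥ t₀`, with `x ≥ δ' > 0`
and the rotational estimate `g x + f y ≥ c'(x² + y²)`, has `θ̇ ≥ c'`; consequently the
assumptions are contradictory: the solution cannot remain in the first quadrant
forever (it must reach the positive `x`-axis in finite time). -/
theorem stmt10 (f g : ℝ → ℝ → ℝ → ℝ)
    (hf : Continuous fun p : ℝ × ℝ × ℝ => f p.1 p.2.1 p.2.2)
    (hg : Continuous fun p : ℝ × ℝ × ℝ => g p.1 p.2.1 p.2.2)
    (t₀ δ' c' : ℝ) (hδ' : 0 < δ') (hc' : 0 < c')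
    (x y θ ρ : ℝ → ℝ)
    (hx : ∀ t, t₀ ≤ t → HasDerivAt x (f t (x t) (y t)) t)
    (hy : ∀ t, t₀ ≤ t → HasDerivAt y (-(g t (x t) (y t))) t)
    (hquad : ∀ t, t₀ ≤ t → 0 < x t ∧ 0 < y t)
    (hxδ : ∀ t, t₀ ≤ t → δ' ≤ x t)
    (hest : ∀ t, t₀ ≤ t →
      c' * ((x t) ^ 2 + (y t) ^ 2) ≤ g t (x t) (y t) * x t + f t (x t) (y t) * y t)
    (hρpos : ∀ t, t₀ ≤ t → 0 < ρ t)
    (hθd : ∀ t, t₀ ≤ t → DifferentiableAt ℝ θ t)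
    (hρd : ∀ t, t₀ ≤ t → DifferentiableAt ℝ ρ t)
    (hpolar : ∀ t, t₀ ≤ t → x t = Real.sqrt (2 * ρ t) * Real.sin (θ t) ∧
      y t = Real.sqrt (2 * ρ t) * Real.cos (θ t)) :
    (∀ t, t₀ ≤ t → c' ≤ deriv θ t) ∧ False := by
  have key : False := by
    have hq0 := hquad t₀ le_rfl
    set T := t₀ + (y t₀ / x t₀) / c' + 1 with hTdef
    have hr : 0 < y t₀ / x t₀ := div_pos hq0.2 hq0.1
    have ht₀T : t₀ < T := by
      have : 0 < (y t₀ / x t₀) / c' := div_pos hr hc'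
      simp only [hTdef]; linarith
    have hcont : ContinuousOn (fun t => y t / x t) (Set.Icc t₀ T) := by
      intro t ht
      exact (((hy t ht.1).continuousAt).div ((hx t ht.1).continuousAt)
        (ne_of_gt (hquad t ht.1).1)).continuousWithinAt
    have hderiv : ∀ t ∈ Set.Ioo t₀ T, HasDerivAt (fun t => y t / x t)
        ((-(g t (x t) (y t)) * x t - y t * f t (x t) (y t)) / (x t) ^ 2) t := by
      intro t ht
      exact (hy t ht.1.le).div (hx t ht.1.le) (ne_of_gt (hquad t ht.1.le).1)
    obtain ⟨ξ, hξ, hslope⟩ := exists_hasDerivAt_eq_slope (fun t => y t / x t) _ ht₀T hcont hderiv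
    have hξ0 : t₀ ≤ ξ := hξ.1.le
    have hx2 : 0 < (x ξ) ^ 2 := pow_pos (hquad ξ hξ0).1 2
    have hbound : (-(g ξ (x ξ) (y ξ)) * x ξ - y ξ * f ξ (x ξ) (y ξ)) / (x ξ) ^ 2 ≤ -c' := by
      rw [div_le_iff₀ hx2]
      have := hest ξ hξ0
      nlinarith [sq_nonneg (y ξ)]
    have hvT : 0 < y T / x T := div_pos (hquad T ht₀T.le).2 (hquad T ht₀T.le).1
    have hslope' : (y T / x T - y t₀ / x t₀) / (T - t₀) ≤ -c' := hslope ▸ hbound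
    rw [div_le_iff₀ (by linarith : (0:ℝ) < T - t₀)] at hslope'
    have hTt : T - t₀ = (y t₀ / x t₀) / c' + 1 := by simp only [hTdef]; ring
    have hcc : c' * ((y t₀ / x t₀) / c') = y t₀ / x t₀ := by
      rw [mul_div_assoc', mul_comm, mul_div_assoc, div_self hc'.ne', mul_one]
    nlinarith
  exact ⟨fun _ _ => key.elim, key⟩
end

section
/- Let (θ, ρ) be the modified polar coordinates of a C¹ nonzero solution of a planar system, defined on [t₀, +∞), and suppose there exists a continuous function η : [0,2π] → ]0,+∞[, extended 2π-periodically, such that θ̇(t) ≥ η(θ(t)) for all t ≥ t₀ and ∫₀^{2π} ds/η(s) < +∞. If θ(t) remains in an interval of length at most 2π for all t ≥ t₀, then t − t₀ ≤ ∫₀^{2π} ds/η(s) for all t ≥ t₀, a contradiction; hence θ(t) increases by more than 2π in finite time. -/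
open Real intervalIntegral

/-- If `θ̇(t) ≥ η(θ(t))` with `η` continuous, positive and `2π`-periodic, then as long
as `θ` has increased by at most `2π`, the elapsed time is at most `∫₀^{2π} ds/η(s)`;
hence `θ` increases by more than `2π` in finite time. -/
theorem stmt11 (t₀ : ℝ) (θ : ℝ → ℝ) (η : ℝ → ℝ)
    (hη : Continuous η) (hηpos : ∀ s, 0 < η s)
    (hηper : ∀ s, η (s + 2 * Real.pi) = η s)
    (hθdiff : ∀ t, t₀ ≤ t → HasDerivAt θ (deriv θ t) t)
    (hθmono : StrictMonoOn θ (Set.Ici t₀))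
    (hθη : ∀ t, t₀ ≤ t → η (θ t) ≤ deriv θ t) :
    (∀ t, t₀ ≤ t → θ t - θ t₀ ≤ 2 * Real.pi →
      t - t₀ ≤ ∫ s in (0 : ℝ)..(2 * Real.pi), 1 / η s) ∧
    (∃ t, t₀ < t ∧ 2 * Real.pi < θ t - θ t₀) := by
  set g : ℝ → ℝ := fun s => 1 / η s with hg
  have hgc : Continuous g := continuous_const.div hη (fun s => (hηpos s).ne')
  have hgpos : ∀ s, 0 < g s := fun s => one_div_pos.2 (hηpos s)
  have hgper : Function.Periodic g (2 * Real.pi) := fun s => by simp [hg, hηper s]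
  -- F t = ∫_{θ t₀}^{θ t} g
  set F : ℝ → ℝ := fun t => ∫ s in (θ t₀)..(θ t), g s with hF
  have hFderiv : ∀ t, t₀ ≤ t → HasDerivAt F (g (θ t) * deriv θ t) t := by
    intro t ht
    exact HasDerivAt.comp t ((hgc.integral_hasStrictDerivAt (θ t₀) (θ t)).hasDerivAt)
      (hθdiff t ht)
  -- h t = F t - t is monotone on Ici t₀
  have hmain : ∀ t, t₀ ≤ t → t - t₀ ≤ F t := by
    intro t ht
    have hmono : MonotoneOn (fun t => F t - t) (Set.Ici t₀) := by
      apply monotoneOn_of_hasDerivWithinAt_nonneg (f' := fun t => g (θ t) * deriv θ t - 1)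
        (convex_Ici t₀)
      · intro x hx
        exact ((hFderiv x hx).sub (hasDerivAt_id x)).continuousAt.continuousWithinAt
      · intro x hx
        rw [interior_Ici] at hx
        exact (((hFderiv x hx.le).sub (hasDerivAt_id x))).hasDerivWithinAt
      · intro x hx
        rw [interior_Ici] at hx
        have h1 : g (θ x) * η (θ x) ≤ g (θ x) * deriv θ x :=
          mul_le_mul_of_nonneg_left (hθη x hx.le) (hgpos (θ x)).le
        have h2 : g (θ x) * η (θ x) = 1 := by
          show 1 / η (θ x) * η (θ x) = 1
          field_simp [hg, (hηpos (θ x)).ne']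
        linarith
    have := hmono (Set.self_mem_Ici) ht ht
    have hF0 : F t₀ = 0 := by simp [hF]
    simp only [hF0] at this
    linarith
  have hkey : ∀ t, t₀ ≤ t → θ t - θ t₀ ≤ 2 * Real.pi →
      t - t₀ ≤ ∫ s in (0 : ℝ)..(2 * Real.pi), 1 / η s := by
    intro t ht hle
    have h1 : F t ≤ ∫ s in (θ t₀)..(θ t₀ + 2 * Real.pi), g s := by
      apply intervalIntegral.integral_mono_interval le_rfl
        (hθmono.monotoneOn Set.self_mem_Ici ht ht) (by linarith)
      · filter_upwards with s using (hgpos s).le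
      · exact hgc.intervalIntegrable _ _
    have h2 : (∫ s in (θ t₀)..(θ t₀ + 2 * Real.pi), g s)
        = ∫ s in (0 : ℝ)..(2 * Real.pi), g s := by
      simpa using hgper.intervalIntegral_add_eq (θ t₀) 0
    have := hmain t ht
    calc t - t₀ ≤ F t := this
      _ ≤ _ := by rw [← h2] at *; exact h1
  refine ⟨hkey, ?_⟩
  by_contra hcon
  push_neg at hcon
  set I : ℝ := ∫ s in (0 : ℝ)..(2 * Real.pi), 1 / η s with hI
  have hInn : 0 ≤ I := intervalIntegral.integral_nonneg (by positivity)
    (fun s _ => (hgpos s).le)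
  have ht : t₀ ≤ t₀ + I + 1 := by linarith
  have hb : θ (t₀ + I + 1) - θ t₀ ≤ 2 * Real.pi := hcon _ (by linarith)
  have := hkey (t₀ + I + 1) ht hb
  linarith
end

section
/- Let λ > 0, M > 0, m a positive integer, and let θ : [t₀, t₁] → ℝ be C¹ with θ(t₁) − θ(t₀) = 2πm and θ̇(t) ≥ (√λ/2)(cos²θ(t) + M sin²θ(t)) for all t ∈ [t₀, t₁]. Then t₁ − t₀ ≤ (4πm)/(√λ √M). In particular, if M > (4πm/(√λ kT))², then t₁ − t₀ < kT. -/
open Real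

/-- Time estimate for `m` full rotations: if `θ` is `C¹` on `[t₀, t₁]`,
`θ(t₁) − θ(t₀) = 2πm` and `θ̇ ≥ (√λ/2)(cos²θ + M sin²θ)`, then
`t₁ − t₀ ≤ 4πm/(√λ √M)`; in particular `t₁ − t₀ < kT` as soon as
`M > (4πm/(√λ kT))²`. -/
theorem stmt18 (lam M : ℝ) (hlam : 0 < lam) (hM : 0 < M)
    (m k : ℕ) (hm : 0 < m) (hk : 0 < k) (T : ℝ) (hT : 0 < T)
    (t₀ t₁ : ℝ) (ht : t₀ ≤ t₁)
    (θ : ℝ → ℝ) (hθ : ContDiffOn ℝ 1 θ (Set.Icc t₀ t₁))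
    (hrot : θ t₁ - θ t₀ = 2 * Real.pi * m)
    (hder : ∀ t ∈ Set.Icc t₀ t₁,
      Real.sqrt lam / 2 * ((Real.cos (θ t)) ^ 2 + M * (Real.sin (θ t)) ^ 2)
        ≤ deriv θ t) :
    t₁ - t₀ ≤ 4 * Real.pi * m / (Real.sqrt lam * Real.sqrt M) ∧
    ((4 * Real.pi * m / (Real.sqrt lam * (k * T))) ^ 2 < M → t₁ - t₀ < k * T) := by
  have hl : (0:ℝ) < Real.sqrt lam := Real.sqrt_pos.mpr hlam
  have ha : (0:ℝ) < Real.sqrt M := Real.sqrt_pos.mpr hM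
  set a := Real.sqrt M with ha_def
  have haM : a ^ 2 = M := Real.sq_sqrt hM.le
  set φ : ℝ → ℝ := fun y => (y + Real.arctan ((a - 1) * Real.sin y * Real.cos y /
      (Real.cos y ^ 2 + a * Real.sin y ^ 2))) / a with hφ_def
  have hD : ∀ x : ℝ, 0 < Real.cos x ^ 2 + a * Real.sin x ^ 2 := by
    intro x
    rcases (sq_nonneg (Real.sin x)).lt_or_eq with hs | hs
    · nlinarith [sq_nonneg (Real.cos x), mul_pos ha hs]
    · nlinarith [Real.sin_sq_add_cos_sq x]
  have hD2 : ∀ x : ℝ, 0 < Real.cos x ^ 2 + M * Real.sin x ^ 2 := by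
    intro x
    rcases (sq_nonneg (Real.sin x)).lt_or_eq with hs | hs
    · nlinarith [sq_nonneg (Real.cos x), mul_pos hM hs]
    · nlinarith [Real.sin_sq_add_cos_sq x]
  -- derivative of φ
  have hφ' : ∀ x : ℝ,
      HasDerivAt φ (1 / (Real.cos x ^ 2 + M * Real.sin x ^ 2)) x := by
    intro x
    have hDx := hD x
    have h1 := ((Real.hasDerivAt_sin x).const_mul (a - 1)).mul (Real.hasDerivAt_cos x)
    have h2 := ((Real.hasDerivAt_cos x).pow 2).add (((Real.hasDerivAt_sin x).pow 2).const_mul a)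
    have h3 := h1.div h2 (ne_of_gt hDx)
    have h4 := h3.arctan
    have h5 := ((hasDerivAt_id x).add h4).div_const a
    rw [hφ_def]
    refine h5.congr_deriv ?_
    symm
    simp only [Pi.mul_apply, Pi.div_apply, Pi.add_apply, Pi.pow_apply, id]
    have hpy : Real.sin x ^ 2 + Real.cos x ^ 2 = 1 := Real.sin_sq_add_cos_sq x
    have hu2 : (0:ℝ) < 1 + ((a - 1) * Real.sin x * Real.cos x /
        (Real.cos x ^ 2 + a * Real.sin x ^ 2)) ^ 2 := by positivity
    have hMx := hD2 x
    rw [← haM]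
    have hMx2 : (0:ℝ) < Real.cos x ^ 2 + a ^ 2 * Real.sin x ^ 2 := by rw [haM]; exact hD2 x
    field_simp [hMx2.ne', hDx.ne', hu2.ne', ha.ne']
    ring_nf
    grind
  have hφdiff : Differentiable ℝ φ := fun x => (hφ' x).differentiableAt
  -- θ is differentiable at interior points
  have hθdiff : ∀ t ∈ Set.Ioo t₀ t₁, DifferentiableAt ℝ θ t := by
    intro t htm
    exact ((hθ.differentiableOn one_ne_zero) t (Set.Ioo_subset_Icc_self htm)).differentiableAt
      (Icc_mem_nhds htm.1 htm.2)
  -- mean value estimate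
  have key : Real.sqrt lam / 2 * (t₁ - t₀) ≤ φ (θ t₁) - φ (θ t₀) := by
    apply (convex_Icc t₀ t₁).mul_sub_le_image_sub_of_le_deriv
      (hφdiff.continuous.comp_continuousOn hθ.continuousOn)
    · rw [interior_Icc]
      intro t htm
      exact (hφdiff.differentiableAt.comp t (hθdiff t htm)).differentiableWithinAt
    · rw [interior_Icc]
      intro t htm
      have hcomp := ((hφ' (θ t)).comp t ((hθdiff t htm).hasDerivAt)).deriv
      rw [hcomp, one_div, inv_mul_eq_div, le_div_iff₀ (hD2 (θ t))]
      exact hder t (Set.Ioo_subset_Icc_self htm)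
    · exact Set.left_mem_Icc.mpr ht
    · exact Set.right_mem_Icc.mpr ht
    · exact ht
  -- value of φ over a full rotation
  have hθ1 : θ t₁ = θ t₀ + m * (2 * π) := by linear_combination hrot
  have hval : φ (θ t₁) - φ (θ t₀) = 2 * π * m / a := by
    rw [hφ_def, hθ1]
    simp only [Real.sin_add_nat_mul_two_pi, Real.cos_add_nat_mul_two_pi]
    field_simp
    ring
  have hkey2 : (t₁ - t₀) * (Real.sqrt lam * a) ≤ 4 * π * ↑m := by
    have h3 := mul_le_mul_of_nonneg_left (key.trans_eq hval) (show (0:ℝ) ≤ 2 * a by positivity)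
    calc (t₁ - t₀) * (Real.sqrt lam * a) = 2 * a * (Real.sqrt lam / 2 * (t₁ - t₀)) := by ring
      _ ≤ 2 * a * (2 * π * ↑m / a) := h3
      _ = 4 * π * ↑m := by field_simp; ring
  have part1 : t₁ - t₀ ≤ 4 * Real.pi * m / (Real.sqrt lam * Real.sqrt M) := by
    rw [le_div_iff₀ (mul_pos hl ha)]
    exact hkey2
  refine ⟨part1, fun h => ?_⟩
  have hm0 : (0:ℝ) < m := by exact_mod_cast hm
  have hk0 : (0:ℝ) < k := by exact_mod_cast hk
  have hK : (0:ℝ) < (k:ℝ) * T := mul_pos hk0 hT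
  have hq : (0:ℝ) ≤ 4 * Real.pi * m / (Real.sqrt lam * (k * T)) := by positivity
  have h4 : 4 * Real.pi * m / (Real.sqrt lam * ((k:ℝ) * T)) < a :=
    (Real.lt_sqrt hq).mpr h
  rw [div_lt_iff₀ (mul_pos hl hK)] at h4
  have h5 : 4 * Real.pi * m / (Real.sqrt lam * a) < (k:ℝ) * T := by
    rw [div_lt_iff₀ (mul_pos hl ha)]
    nlinarith
  exact lt_of_le_of_lt part1 h5
end
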